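/- Let F be a polynomial with Hill interval [x₀, x₁] and regular endpoints, and set w(x) = (1 - F(x)²)^{-1/2}. Near the endpoint x₀, w(x) is bounded above by C(x - x₀)^{-1/2} for some constant C > 0 and x close to x₀ in (x₀, x₁); hence w is integrable near x₀. -/
import Mathlib
open Polynomial Set MeasureTheory Filter Topology

theorem weight_bound_near_endpoint (F : Polynomial ℝ) (x₀ x₁ : ℝ) (hlt : x₀ < x₁)
    (hHill : ∀ x ∈ Ioo x₀ x₁, (F.eval x) ^ 2 < 1)
    (h0 : (F.eval x₀) ^ 2 = 1)
    (hs0 : (Polynomial.derivative (1 - F ^ 2)).eval x₀ ≠ 0) :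
    ∃ C > (0 : ℝ), ∃ δ > (0 : ℝ),
      (∀ x ∈ Ioo x₀ (x₀ + δ), (x - x₀) / C ≤ 1 - (F.eval x) ^ 2) ∧
      (∀ x ∈ Ioo x₀ (x₀ + δ),
        1 / Real.sqrt (1 - (F.eval x) ^ 2) ≤ Real.sqrt C * (x - x₀) ^ (-(1 / 2 : ℝ))) ∧
      IntegrableOn (fun x => 1 / Real.sqrt (1 - (F.eval x) ^ 2)) (Ioo x₀ (x₀ + δ)) := by
  set G : ℝ → ℝ := fun x => 1 - (F.eval x) ^ 2 with hG
  set d : ℝ := (Polynomial.derivative (1 - F ^ 2)).eval x₀ with hd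
  have hG0 : G x₀ = 0 := by simp [hG, h0]
  have hder : HasDerivAt G d x₀ := by
    have h := (1 - F ^ 2 : ℝ[X]).hasDerivAt x₀
    have : (fun x => (1 - F ^ 2 : ℝ[X]).eval x) = G := by
      funext x; simp [hG]
    rwa [this] at h
  have hslope : Tendsto (slope G x₀) (𝓝[>] x₀) (𝓝 d) :=
    (hasDerivAt_iff_tendsto_slope.mp hder).mono_left
      (nhdsWithin_mono _ (fun x hx => ne_of_gt hx))
  have hslope_eq : ∀ x, slope G x₀ x = G x / (x - x₀) := by
    intro x; simp [slope, hG0, div_eq_inv_mul]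
  have hslope_pos : ∀ᶠ x in 𝓝[>] x₀, 0 ≤ slope G x₀ x := by
    filter_upwards [Ioo_mem_nhdsGT_of_mem ⟨le_refl _, hlt⟩] with x hx
    have hGx : 0 < G x := by have := hHill x hx; simp only [hG]; linarith
    rw [hslope_eq]
    exact le_of_lt (div_pos hGx (by linarith [hx.1]))
  have hd0 : 0 < d :=
    lt_of_le_of_ne (ge_of_tendsto hslope hslope_pos) (Ne.symm hs0)
  have hev : ∀ᶠ x in 𝓝[>] x₀, d / 2 < slope G x₀ x :=
    hslope.eventually (eventually_gt_nhds (by linarith))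
  obtain ⟨u, hu, hsub⟩ := mem_nhdsGT_iff_exists_Ioo_subset.mp hev
  have hu' : x₀ < u := hu
  have hCpos : (0:ℝ) < 2 / d := by positivity
  have huu : x₀ + (u - x₀) = u := by ring
  -- Part 1 key estimate
  have key : ∀ x ∈ Ioo x₀ u, (x - x₀) / (2 / d) ≤ G x := by
    intro x hx
    have h1 : d / 2 < G x / (x - x₀) := by rw [← hslope_eq]; exact hsub hx
    have hx0 : 0 < x - x₀ := by linarith [hx.1]
    have h2 : d / 2 * (x - x₀) < G x := (lt_div_iff₀ hx0).mp h1
    rw [div_le_iff₀ (by positivity)]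
    calc x - x₀ = (d / 2 * (x - x₀)) * (2 / d) := by field_simp
      _ ≤ G x * (2 / d) := mul_le_mul_of_nonneg_right (le_of_lt h2) (by positivity)
  have hGpos : ∀ x ∈ Ioo x₀ u, 0 < G x := by
    intro x hx
    have hx0 : 0 < x - x₀ := by linarith [hx.1]
    exact lt_of_lt_of_le (by positivity) (key x hx)
  -- Part 2 pointwise bound
  have key2 : ∀ x ∈ Ioo x₀ u,
      1 / Real.sqrt (G x) ≤ Real.sqrt (2 / d) * (x - x₀) ^ (-(1 / 2 : ℝ)) := by
    intro x hx
    have hx0 : 0 < x - x₀ := by linarith [hx.1]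
    have hq : 0 < (x - x₀) / (2 / d) := by positivity
    have h1 : Real.sqrt ((x - x₀) / (2 / d)) ≤ Real.sqrt (G x) :=
      Real.sqrt_le_sqrt (key x hx)
    have h2 : 1 / Real.sqrt (G x) ≤ 1 / Real.sqrt ((x - x₀) / (2 / d)) :=
      one_div_le_one_div_of_le (Real.sqrt_pos.mpr hq) h1
    refine h2.trans_eq ?_
    rw [Real.sqrt_div hx0.le, Real.rpow_neg hx0.le, ← Real.sqrt_eq_rpow, one_div_div,
      div_eq_mul_inv]
  refine ⟨2 / d, hCpos, u - x₀, by linarith, ?_, ?_, ?_⟩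
  · intro x hx; rw [huu] at hx; exact key x hx
  · intro x hx; rw [huu] at hx; exact key2 x hx
  · rw [huu]
    have hg : IntegrableOn
        (fun x => Real.sqrt (2 / d) * (x - x₀) ^ (-(1 / 2 : ℝ))) (Ioo x₀ u) := by
      have h1 : IntervalIntegrable (fun x : ℝ => x ^ (-(1 / 2 : ℝ))) volume 0 (u - x₀) :=
        intervalIntegral.intervalIntegrable_rpow' (by norm_num)
      have h2 : IntervalIntegrable (fun x : ℝ => (x - x₀) ^ (-(1 / 2 : ℝ))) volume x₀ u := by
        have := h1.comp_sub_right x₀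
        simpa [huu] using this
      have h4 : IntegrableOn (fun x : ℝ => Real.sqrt (2 / d) * (x - x₀) ^ (-(1 / 2 : ℝ)))
          (Ioc x₀ u) := by
        rw [← intervalIntegrable_iff_integrableOn_Ioc_of_le hu'.le]
        exact h2.const_mul _
      exact h4.mono_set Ioo_subset_Ioc_self
    refine Integrable.mono' hg ?_ ?_
    · have hc : ContinuousOn (fun x => 1 / Real.sqrt (G x)) (Ioo x₀ u) := by
        apply ContinuousOn.div continuousOn_const
        · exact (Real.continuous_sqrt.comp (continuous_const.sub (F.continuous.pow 2))).continuousOn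
        · intro x hx
          exact ne_of_gt (Real.sqrt_pos.mpr (hGpos x hx))
      exact hc.aestronglyMeasurable measurableSet_Ioo
    · rw [ae_restrict_iff' measurableSet_Ioo]
      filter_upwards with x hx
      rw [Real.norm_eq_abs, abs_of_nonneg (by positivity)]
      exact key2 x hx
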